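/- Let X = (B_1, B_2, d, i, j) be an ADHM datum on (V_0, V_1, W) satisfying the ADHM relation, and assume X is (m,m+1)-semistable. Then the linear map dμ : Hom(V_0, V_1) ⊕ Hom(V_1, V_0) ⊕ Hom(V_1, V_0) ⊕ Hom(W, V_0) ⊕ Hom(V_1, W) → Hom(V_1, V_0) defined by dμ(d̃, B̃_1, B̃_2, ĩ, j̃) = B_1∘d∘B̃_2 + B_1∘d̃∘B_2 + B̃_1∘d∘B_2 − B_2∘d∘B̃_1 − B_2∘d̃∘B_1 − B̃_2∘d∘B_1 + ĩ∘j + i∘j̃ is surjective. -/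

import Mathlib

open Module

/-- An ADHM datum on `(V0, V1, W)`: maps `B1 B2 : V1 → V0`, `d : V0 → V1`, `i : W → V0`,
`j : V1 → W` satisfying the ADHM relation `B1∘d∘B2 − B2∘d∘B1 + i∘j = 0`. -/
structure ADHMW (V0 V1 W : Type*)
    [AddCommGroup V0] [Module ℂ V0] [AddCommGroup V1] [Module ℂ V1]
    [AddCommGroup W] [Module ℂ W] where
  B1 : V1 →ₗ[ℂ] V0
  B2 : V1 →ₗ[ℂ] V0
  d : V0 →ₗ[ℂ] V1
  i : W →ₗ[ℂ] V0
  j : V1 →ₗ[ℂ] W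
  rel : B1 ∘ₗ d ∘ₗ B2 - B2 ∘ₗ d ∘ₗ B1 + i ∘ₗ j = 0

/-- `(m, m+1)`-semistability of an ADHM datum. -/
def MMSemistable (m : ℕ) {V0 V1 W : Type*}
    [AddCommGroup V0] [Module ℂ V0] [AddCommGroup V1] [Module ℂ V1]
    [AddCommGroup W] [Module ℂ W] (X : ADHMW V0 V1 W) : Prop :=
  (∀ (S0 : Submodule ℂ V0) (S1 : Submodule ℂ V1),
      (∀ x ∈ S1, X.B1 x ∈ S0) → (∀ x ∈ S1, X.B2 x ∈ S0) →
      (∀ x ∈ S0, X.d x ∈ S1) → (∀ x ∈ S1, X.j x = 0) →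
      (m : ℤ) * (finrank ℂ S1 : ℤ) ≤ ((m : ℤ) + 1) * (finrank ℂ S0 : ℤ)) ∧
  (∀ (T0 : Submodule ℂ V0) (T1 : Submodule ℂ V1),
      (∀ x ∈ T1, X.B1 x ∈ T0) → (∀ x ∈ T1, X.B2 x ∈ T0) →
      (∀ x ∈ T0, X.d x ∈ T1) → (∀ w, X.i w ∈ T0) →
      ((m : ℤ) + 1) * ((finrank ℂ V0 : ℤ) - (finrank ℂ T0 : ℤ)) ≤
        (m : ℤ) * ((finrank ℂ V1 : ℤ) - (finrank ℂ T1 : ℤ)))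

section Aux

/-- Nondegeneracy of the trace pairing `Hom(A,B) × Hom(B,A) → ℂ`. -/
private lemma trace_pairing_nondeg {A B : Type*} [AddCommGroup A] [Module ℂ A]
    [FiniteDimensional ℂ A] [AddCommGroup B] [Module ℂ B] [FiniteDimensional ℂ B]
    (ξ : A →ₗ[ℂ] B) (h : ∀ C : B →ₗ[ℂ] A, LinearMap.trace ℂ B (ξ ∘ₗ C) = 0) : ξ = 0 := by
  ext v
  rw [LinearMap.zero_apply, ← Module.forall_dual_apply_eq_zero_iff ℂ]
  intro f
  have h1 : ξ ∘ₗ (f.smulRight v) = dualTensorHom ℂ B B (f ⊗ₜ (ξ v)) := by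
    ext x; simp [dualTensorHom_apply]
  have h2 := h (f.smulRight v)
  rwa [h1, LinearMap.trace_eq_contract_apply, contractLeft_apply] at h2

/-- The trace pairing as a map to the dual. -/
private noncomputable def Phi (A B : Type*) [AddCommGroup A] [Module ℂ A]
    [AddCommGroup B] [Module ℂ B] :
    (A →ₗ[ℂ] B) →ₗ[ℂ] Module.Dual ℂ (B →ₗ[ℂ] A) where
  toFun ξ := (LinearMap.trace ℂ B) ∘ₗ (LinearMap.llcomp ℂ B A B ξ)
  map_add' x y := by ext C; simp [LinearMap.add_comp]
  map_smul' c x := by ext C; simp [LinearMap.smul_comp]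

private lemma Phi_apply {A B : Type*} [AddCommGroup A] [Module ℂ A]
    [AddCommGroup B] [Module ℂ B]
    (ξ : A →ₗ[ℂ] B) (C : B →ₗ[ℂ] A) :
    Phi A B ξ C = LinearMap.trace ℂ B (ξ ∘ₗ C) := rfl

private lemma Phi_surjective (A B : Type*) [AddCommGroup A] [Module ℂ A]
    [FiniteDimensional ℂ A] [AddCommGroup B] [Module ℂ B] [FiniteDimensional ℂ B] :
    Function.Surjective (Phi A B) := by
  have hinj : Function.Injective (Phi A B) := by
    rw [← LinearMap.ker_eq_bot]
    refine (Submodule.eq_bot_iff _).mpr fun ξ hξ => ?_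
    refine trace_pairing_nondeg ξ fun C => ?_
    have h0 : Phi A B ξ C = 0 := by rw [LinearMap.mem_ker.mp hξ]; rfl
    rwa [Phi_apply] at h0
  have hdim : finrank ℂ (A →ₗ[ℂ] B) = finrank ℂ (Module.Dual ℂ (B →ₗ[ℂ] A)) := by
    rw [Subspace.dual_finrank_eq, Module.finrank_linearMap, Module.finrank_linearMap, mul_comm]
  exact (LinearMap.injective_iff_surjective_of_finrank_eq_finrank hdim).mp hinj

end Aux

section Pieces

variable {V0 V1 W : Type*}
    [AddCommGroup V0] [Module ℂ V0] [AddCommGroup V1] [Module ℂ V1]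
    [AddCommGroup W] [Module ℂ W]

private def Ld (X : ADHMW V0 V1 W) : (V0 →ₗ[ℂ] V1) →ₗ[ℂ] (V1 →ₗ[ℂ] V0) where
  toFun dt := X.B1 ∘ₗ dt ∘ₗ X.B2 - X.B2 ∘ₗ dt ∘ₗ X.B1
  map_add' f g := by ext x; simp; abel
  map_smul' c f := by ext x; simp [smul_sub]

private def L1 (X : ADHMW V0 V1 W) : (V1 →ₗ[ℂ] V0) →ₗ[ℂ] (V1 →ₗ[ℂ] V0) where
  toFun Bt1 := Bt1 ∘ₗ X.d ∘ₗ X.B2 - X.B2 ∘ₗ X.d ∘ₗ Bt1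
  map_add' f g := by ext x; simp; abel
  map_smul' c f := by ext x; simp [smul_sub]

private def L2 (X : ADHMW V0 V1 W) : (V1 →ₗ[ℂ] V0) →ₗ[ℂ] (V1 →ₗ[ℂ] V0) where
  toFun Bt2 := X.B1 ∘ₗ X.d ∘ₗ Bt2 - Bt2 ∘ₗ X.d ∘ₗ X.B1
  map_add' f g := by ext x; simp; abel
  map_smul' c f := by ext x; simp [smul_sub]

private def Li (X : ADHMW V0 V1 W) : (W →ₗ[ℂ] V0) →ₗ[ℂ] (V1 →ₗ[ℂ] V0) where
  toFun it := it ∘ₗ X.j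
  map_add' f g := by ext x; simp
  map_smul' c f := by ext x; simp [smul_sub]

private def Lj (X : ADHMW V0 V1 W) : (V1 →ₗ[ℂ] W) →ₗ[ℂ] (V1 →ₗ[ℂ] V0) where
  toFun jt := X.i ∘ₗ jt
  map_add' f g := by ext x; simp
  map_smul' c f := by ext x; simp [smul_sub]

private lemma Ld_apply (X : ADHMW V0 V1 W) (dt : V0 →ₗ[ℂ] V1) :
    Ld X dt = X.B1 ∘ₗ dt ∘ₗ X.B2 - X.B2 ∘ₗ dt ∘ₗ X.B1 := rfl

private lemma L1_apply (X : ADHMW V0 V1 W) (Bt1 : V1 →ₗ[ℂ] V0) :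
    L1 X Bt1 = Bt1 ∘ₗ X.d ∘ₗ X.B2 - X.B2 ∘ₗ X.d ∘ₗ Bt1 := rfl

private lemma L2_apply (X : ADHMW V0 V1 W) (Bt2 : V1 →ₗ[ℂ] V0) :
    L2 X Bt2 = X.B1 ∘ₗ X.d ∘ₗ Bt2 - Bt2 ∘ₗ X.d ∘ₗ X.B1 := rfl

private lemma Li_apply (X : ADHMW V0 V1 W) (it : W →ₗ[ℂ] V0) :
    Li X it = it ∘ₗ X.j := rfl

private lemma Lj_apply (X : ADHMW V0 V1 W) (jt : V1 →ₗ[ℂ] W) :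
    Lj X jt = X.i ∘ₗ jt := rfl

end Pieces


private lemma adhm_arith (mz s0 s1 t0 t1 k r a0 a1 : ℤ) (hm : 0 ≤ mz)
    (e1 : s1 + t0 = a0) (e2 : s0 + k = s1 + s1) (e3 : r + t1 = a1) (e4 : r ≤ k)
    (I1 : mz * s1 ≤ (mz + 1) * s0) (I2 : (mz + 1) * (a0 - t0) ≤ mz * (a1 - t1))
    (hs1 : 1 ≤ s1) : False := by
  have k1 : a0 - t0 = s1 := by linarith
  have k2 : a1 - t1 = r := by linarith
  rw [k1, k2] at I2
  have k3 : r ≤ 2 * s1 - s0 := by linarith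
  have k4 : mz * s0 ≤ (mz - 1) * s1 := by
    nlinarith [mul_le_mul_of_nonneg_left k3 hm]
  nlinarith [mul_le_mul_of_nonneg_left I1 hm,
    mul_le_mul_of_nonneg_left k4 (by linarith : (0 : ℤ) ≤ mz + 1)]

set_option maxHeartbeats 1000000 in
/-- On an `(m,m+1)`-semistable ADHM datum, the differential `dμ` of the moment map is
surjective. -/
theorem dmu_surjective (m : ℕ) {V0 V1 W : Type*}
    [AddCommGroup V0] [Module ℂ V0] [FiniteDimensional ℂ V0]
    [AddCommGroup V1] [Module ℂ V1] [FiniteDimensional ℂ V1]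
    [AddCommGroup W] [Module ℂ W] [FiniteDimensional ℂ W]
    (X : ADHMW V0 V1 W) (hX : MMSemistable m X) :
    ∀ C : V1 →ₗ[ℂ] V0,
      ∃ (dt : V0 →ₗ[ℂ] V1) (Bt1 Bt2 : V1 →ₗ[ℂ] V0) (it : W →ₗ[ℂ] V0) (jt : V1 →ₗ[ℂ] W),
        X.B1 ∘ₗ X.d ∘ₗ Bt2 + X.B1 ∘ₗ dt ∘ₗ X.B2 + Bt1 ∘ₗ X.d ∘ₗ X.B2
          - X.B2 ∘ₗ X.d ∘ₗ Bt1 - X.B2 ∘ₗ dt ∘ₗ X.B1 - Bt2 ∘ₗ X.d ∘ₗ X.B1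
          + it ∘ₗ X.j + X.i ∘ₗ jt = C := by
  classical
  intro C
  set R : Submodule ℂ (V1 →ₗ[ℂ] V0) :=
    LinearMap.range (Ld X) ⊔ LinearMap.range (L1 X) ⊔ LinearMap.range (L2 X)
      ⊔ LinearMap.range (Li X) ⊔ LinearMap.range (Lj X) with hRdef
  have hmemd : ∀ dt, Ld X dt ∈ R := fun dt => by
    apply Submodule.mem_sup_left; apply Submodule.mem_sup_left
    apply Submodule.mem_sup_left; apply Submodule.mem_sup_left
    exact LinearMap.mem_range_self _ _
  have hmem1 : ∀ Bt1, L1 X Bt1 ∈ R := fun Bt1 => by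
    apply Submodule.mem_sup_left; apply Submodule.mem_sup_left
    apply Submodule.mem_sup_left; apply Submodule.mem_sup_right
    exact LinearMap.mem_range_self _ _
  have hmem2 : ∀ Bt2, L2 X Bt2 ∈ R := fun Bt2 => by
    apply Submodule.mem_sup_left; apply Submodule.mem_sup_left
    apply Submodule.mem_sup_right
    exact LinearMap.mem_range_self _ _
  have hmemi : ∀ it, Li X it ∈ R := fun it => by
    apply Submodule.mem_sup_left; apply Submodule.mem_sup_right
    exact LinearMap.mem_range_self _ _
  have hmemj : ∀ jt, Lj X jt ∈ R := fun jt => by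
    apply Submodule.mem_sup_right
    exact LinearMap.mem_range_self _ _
  -- main claim: R = ⊤
  have hRtop : R = ⊤ := by
    by_contra hne
    have hlt : R < ⊤ := lt_top_iff_ne_top.mpr hne
    -- find a nonzero annihilating functional
    have hann_ne : R.dualAnnihilator ≠ ⊥ := by
      intro hb
      have h1 : finrank ℂ ((V1 →ₗ[ℂ] V0) ⧸ R) = finrank ℂ R.dualAnnihilator :=
        (Subspace.quotEquivAnnihilator R).finrank_eq
      rw [hb, finrank_bot] at h1
      have h2 := Submodule.finrank_quotient_add_finrank R
      have h3 := Submodule.finrank_lt hlt.ne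
      omega
    obtain ⟨φ, hφmem, hφne⟩ := Submodule.exists_mem_ne_zero_of_ne_bot hann_ne
    have hann : ∀ A ∈ R, φ A = 0 := (Submodule.mem_dualAnnihilator φ).mp hφmem
    obtain ⟨ξ, hφ⟩ := Phi_surjective V0 V1 φ
    have hξne : ξ ≠ 0 := by
      rintro rfl; exact hφne (by rw [← hφ, map_zero])
    have htr : ∀ A ∈ R, LinearMap.trace ℂ V1 (ξ ∘ₗ A) = 0 := by
      intro A hA
      rw [← Phi_apply, hφ]; exact hann A hA
    -- The five relations
    have hR3 : X.B2 ∘ₗ ξ ∘ₗ X.B1 - X.B1 ∘ₗ ξ ∘ₗ X.B2 = 0 := by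
      apply trace_pairing_nondeg
      intro dt
      have h1 := htr _ (hmemd dt)
      have e1 := LinearMap.trace_comp_comm' X.B2 (ξ ∘ₗ (X.B1 ∘ₗ dt))
      have e2 := LinearMap.trace_comp_comm' X.B1 (ξ ∘ₗ (X.B2 ∘ₗ dt))
      rw [Ld_apply] at h1
      simp only [LinearMap.comp_sub, LinearMap.sub_comp,
        map_sub, LinearMap.comp_assoc] at h1 e1 e2 ⊢
      linear_combination h1 - e1 + e2
    have hR1 : X.d ∘ₗ X.B2 ∘ₗ ξ - ξ ∘ₗ X.B2 ∘ₗ X.d = 0 := by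
      apply trace_pairing_nondeg
      intro Bt1
      have h1 := htr _ (hmem1 Bt1)
      have e1 := LinearMap.trace_comp_comm' (ξ ∘ₗ Bt1) (X.d ∘ₗ X.B2)
      rw [L1_apply] at h1
      simp only [LinearMap.comp_sub, LinearMap.sub_comp,
        map_sub, LinearMap.comp_assoc] at h1 e1 ⊢
      linear_combination h1 + e1
    have hR2 : ξ ∘ₗ X.B1 ∘ₗ X.d - X.d ∘ₗ X.B1 ∘ₗ ξ = 0 := by
      apply trace_pairing_nondeg
      intro Bt2
      have h1 := htr _ (hmem2 Bt2)
      have e1 := LinearMap.trace_comp_comm' (ξ ∘ₗ Bt2) (X.d ∘ₗ X.B1)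
      rw [L2_apply] at h1
      simp only [LinearMap.comp_sub, LinearMap.sub_comp,
        map_sub, LinearMap.comp_assoc] at h1 e1 ⊢
      linear_combination h1 - e1
    have hR4 : X.j ∘ₗ ξ = 0 := by
      apply trace_pairing_nondeg
      intro it
      have h1 := htr _ (hmemi it)
      have e1 := LinearMap.trace_comp_comm' X.j (ξ ∘ₗ it)
      rw [Li_apply] at h1
      simp only [LinearMap.comp_assoc] at h1 e1 ⊢
      linear_combination h1 - e1
    have hR5 : ξ ∘ₗ X.i = 0 := by
      apply trace_pairing_nondeg
      intro jt
      have h1 := htr _ (hmemj jt)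
      rw [Lj_apply] at h1
      simp only [LinearMap.comp_assoc] at h1 ⊢
      linear_combination h1
    -- pointwise versions
    have pR1 : ∀ x, X.d (X.B2 (ξ x)) = ξ (X.B2 (X.d x)) := by
      intro x
      have h0 := LinearMap.congr_fun hR1 x
      simpa [sub_eq_zero] using h0
    have pR2 : ∀ x, ξ (X.B1 (X.d x)) = X.d (X.B1 (ξ x)) := by
      intro x
      have h0 := LinearMap.congr_fun hR2 x
      simpa [sub_eq_zero] using h0
    have pR3 : ∀ x, X.B2 (ξ (X.B1 x)) = X.B1 (ξ (X.B2 x)) := by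
      intro x
      have h0 := LinearMap.congr_fun hR3 x
      simpa [sub_eq_zero] using h0
    have pR4 : ∀ x, X.j (ξ x) = 0 := fun x => by
      simpa using LinearMap.congr_fun hR4 x
    have pR5 : ∀ w, ξ (X.i w) = 0 := fun w => by
      simpa using LinearMap.congr_fun hR5 w
    -- submodules
    set S1 : Submodule ℂ V1 := LinearMap.range ξ with hS1
    set S0 : Submodule ℂ V0 := S1.map X.B1 ⊔ S1.map X.B2 with hS0
    set T0 : Submodule ℂ V0 := LinearMap.ker ξ with hT0
    set T1 : Submodule ℂ V1 :=
      LinearMap.ker (ξ ∘ₗ X.B1) ⊓ LinearMap.ker (ξ ∘ₗ X.B2) with hT1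
    -- the auxiliary maps for dimension counting
    have hc1 : ∀ v, (ξ ∘ₗ X.B2) v ∈ S1 := fun v => LinearMap.mem_range_self _ _
    have hc2 : ∀ v, (-(ξ ∘ₗ X.B1)) v ∈ S1 := fun v => by
      simpa using S1.neg_mem (LinearMap.mem_range_self ξ (X.B1 v))
    set ρS : V1 →ₗ[ℂ] (S1 × S1) :=
      ((ξ ∘ₗ X.B2).codRestrict S1 hc1).prod ((-(ξ ∘ₗ X.B1)).codRestrict S1 hc2) with hρS
    set ψS : (S1 × S1) →ₗ[ℂ] V0 :=
      (X.B1 ∘ₗ S1.subtype).coprod (X.B2 ∘ₗ S1.subtype) with hψS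
    have hψρ : ∀ v, ρS v ∈ LinearMap.ker ψS := by
      intro v
      rw [LinearMap.mem_ker]
      simp only [hρS, hψS, LinearMap.prod_apply, Function.prod, LinearMap.coprod_apply,
        LinearMap.comp_apply, Submodule.coe_subtype, LinearMap.codRestrict_apply,
        LinearMap.neg_apply, map_neg]
      rw [pR3 v]
      abel
    set ρhat : V1 →ₗ[ℂ] (LinearMap.ker ψS) :=
      ρS.codRestrict (LinearMap.ker ψS) hψρ with hρhat
    -- kernels
    have hkerneg : LinearMap.ker (-(ξ ∘ₗ X.B1)) = LinearMap.ker (ξ ∘ₗ X.B1) := by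
      ext x; simp [neg_eq_zero]
    have hkerρ : LinearMap.ker ρhat = T1 := by
      rw [hρhat, LinearMap.ker_codRestrict, hρS, LinearMap.ker_prod,
        LinearMap.ker_codRestrict, LinearMap.ker_codRestrict, hkerneg, hT1]
      exact inf_comm _ _
    -- range of ψS
    have hrangeψ : LinearMap.range ψS = S0 := by
      rw [hψS, LinearMap.range_coprod, LinearMap.range_comp, LinearMap.range_comp,
        Submodule.range_subtype, hS0]
    -- dimension bookkeeping
    have E1 : finrank ℂ S1 + finrank ℂ T0 = finrank ℂ V0 := by
      rw [hS1, hT0]; exact LinearMap.finrank_range_add_finrank_ker ξ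
    have E2 : finrank ℂ S0 + finrank ℂ (LinearMap.ker ψS) = finrank ℂ S1 + finrank ℂ S1 := by
      have h0 := LinearMap.finrank_range_add_finrank_ker ψS
      rwa [hrangeψ, Module.finrank_prod] at h0
    have E3 : finrank ℂ (LinearMap.range ρhat) + finrank ℂ T1 = finrank ℂ V1 := by
      rw [← hkerρ]; exact LinearMap.finrank_range_add_finrank_ker ρhat
    have E4 : finrank ℂ (LinearMap.range ρhat) ≤ finrank ℂ (LinearMap.ker ψS) :=
      (LinearMap.range ρhat).finrank_le
    -- semistability inequalities
    have I1 : (m : ℤ) * (finrank ℂ S1 : ℤ) ≤ ((m : ℤ) + 1) * (finrank ℂ S0 : ℤ) := by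
      apply hX.1 S0 S1
      · intro x hx; exact Submodule.mem_sup_left (Submodule.mem_map_of_mem hx)
      · intro x hx; exact Submodule.mem_sup_right (Submodule.mem_map_of_mem hx)
      · intro x hx
        have hle : S0 ≤ Submodule.comap X.d S1 := by
          rw [hS0]
          apply sup_le
          · rw [Submodule.map_le_iff_le_comap]
            rintro y ⟨a, rfl⟩
            simp only [Submodule.mem_comap]
            rw [← pR2 a]
            exact LinearMap.mem_range_self _ _
          · rw [Submodule.map_le_iff_le_comap]
            rintro y ⟨a, rfl⟩
            simp only [Submodule.mem_comap]
            rw [pR1 a]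
            exact LinearMap.mem_range_self _ _
        exact hle hx
      · rintro x ⟨a, rfl⟩; exact pR4 a
    have I2 : ((m : ℤ) + 1) * ((finrank ℂ V0 : ℤ) - (finrank ℂ T0 : ℤ)) ≤
        (m : ℤ) * ((finrank ℂ V1 : ℤ) - (finrank ℂ T1 : ℤ)) := by
      apply hX.2 T0 T1
      · intro x hx
        exact LinearMap.mem_ker.mpr (LinearMap.mem_ker.mp hx.1)
      · intro x hx
        exact LinearMap.mem_ker.mpr (LinearMap.mem_ker.mp hx.2)
      · intro x hx
        have hx0 : ξ x = 0 := LinearMap.mem_ker.mp hx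
        rw [hT1, Submodule.mem_inf]
        constructor
        · rw [LinearMap.mem_ker, LinearMap.comp_apply, pR2 x, hx0, map_zero, map_zero]
        · rw [LinearMap.mem_ker, LinearMap.comp_apply, ← pR1 x, hx0, map_zero, map_zero]
      · intro w; exact LinearMap.mem_ker.mpr (pR5 w)
    -- the contradiction
    have hs1pos : 0 < finrank ℂ S1 := by
      rcases Nat.eq_zero_or_pos (finrank ℂ S1) with h | h
      · exfalso
        apply hξne
        rw [← LinearMap.range_eq_bot, ← hS1]
        exact Submodule.finrank_eq_zero.mp h
      · exact h
    have hmn : (0 : ℤ) ≤ (m : ℤ) := Int.ofNat_nonneg m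
    have e1 : (finrank ℂ S1 : ℤ) + (finrank ℂ T0 : ℤ) = (finrank ℂ V0 : ℤ) := by
      exact_mod_cast E1
    have e2 : (finrank ℂ S0 : ℤ) + (finrank ℂ (LinearMap.ker ψS) : ℤ)
        = (finrank ℂ S1 : ℤ) + (finrank ℂ S1 : ℤ) := by exact_mod_cast E2
    have e3 : (finrank ℂ (LinearMap.range ρhat) : ℤ) + (finrank ℂ T1 : ℤ)
        = (finrank ℂ V1 : ℤ) := by exact_mod_cast E3
    have e4 : (finrank ℂ (LinearMap.range ρhat) : ℤ)
        ≤ (finrank ℂ (LinearMap.ker ψS) : ℤ) := by exact_mod_cast E4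
    have hs1 : (1 : ℤ) ≤ (finrank ℂ S1 : ℤ) := by exact_mod_cast hs1pos
    exact adhm_arith (m : ℤ) (finrank ℂ S0 : ℤ) (finrank ℂ S1 : ℤ) (finrank ℂ T0 : ℤ)
      (finrank ℂ T1 : ℤ) (finrank ℂ (LinearMap.ker ψS) : ℤ)
      (finrank ℂ (LinearMap.range ρhat) : ℤ) (finrank ℂ V0 : ℤ) (finrank ℂ V1 : ℤ)
      hmn e1 e2 e3 e4 I1 I2 hs1
  -- decompose C
  have hC : C ∈ R := hRtop ▸ Submodule.mem_top
  rw [hRdef, Submodule.mem_sup] at hC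
  obtain ⟨y4, hy4, z5, hz5, rfl⟩ := hC
  rw [Submodule.mem_sup] at hy4
  obtain ⟨y3, hy3, z4, hz4, rfl⟩ := hy4
  rw [Submodule.mem_sup] at hy3
  obtain ⟨y2, hy2, z3, hz3, rfl⟩ := hy3
  rw [Submodule.mem_sup] at hy2
  obtain ⟨z1, hz1, z2, hz2, rfl⟩ := hy2
  obtain ⟨dt, rfl⟩ := hz1
  obtain ⟨Bt1, rfl⟩ := hz2
  obtain ⟨Bt2, rfl⟩ := hz3
  obtain ⟨it, rfl⟩ := hz4
  obtain ⟨jt, rfl⟩ := hz5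
  refine ⟨dt, Bt1, Bt2, it, jt, ?_⟩
  rw [Ld_apply, L1_apply, L2_apply, Li_apply, Lj_apply]
  abel
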